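/- For every k ≥ 1, the normalized Olshanetsky–Perelomov operator P_k satisfies the Leibniz rule on symmetric polynomials: if f and g are symmetric polynomials in ℚ[x₁,…,xₙ], then P_k(f·g) = P_k(f)·g + f·P_k(g). -/
import Mathlib


open MvPolynomial

/-- The normalized Olshanetsky–Perelomov operator
`P_k(f) = ∑_i 𝔇_i^{k−1}(∂f/∂x_i)`, built from the degenerate Dunkl operators
`𝔇_i(p) = ∑_{j≠i} (s_{ij}p − p)/(x_i − x_j)`, satisfies the Leibniz rule on
symmetric polynomials: `P_k(f·g) = P_k(f)·g + f·P_k(g)`. -/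
theorem OP_hamiltonian_leibniz (n : ℕ) (hn : 1 ≤ n)
    (Δ : Fin n → Fin n → MvPolynomial (Fin n) ℚ → MvPolynomial (Fin n) ℚ)
    (hΔ : ∀ i j p, (X i - X j) * Δ i j p = rename (Equiv.swap i j) p - p)
    (D : Fin n → MvPolynomial (Fin n) ℚ → MvPolynomial (Fin n) ℚ)
    (hD : ∀ i p, D i p = ∑ j ∈ Finset.univ.erase i, Δ i j p)
    (P : ℕ → MvPolynomial (Fin n) ℚ → MvPolynomial (Fin n) ℚ)
    (hP : ∀ k f, P k f = ∑ i : Fin n, (D i)^[k - 1] (pderiv i f))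
    (k : ℕ) (hk : 1 ≤ k)
    (f g : MvPolynomial (Fin n) ℚ) (hf : f.IsSymmetric) (hg : g.IsSymmetric) :
    P k (f * g) = P k f * g + f * P k g := by
  have hXne : ∀ i j : Fin n, i ≠ j → (X i - X j : MvPolynomial (Fin n) ℚ) ≠ 0 := by
    intro i j h
    exact sub_ne_zero.mpr fun e => h (X_injective e)
  -- Δ is multiplicative over symmetric polynomials
  have hΔmul : ∀ (i j : Fin n), i ≠ j → ∀ p (h : MvPolynomial (Fin n) ℚ),
      h.IsSymmetric → Δ i j (p * h) = Δ i j p * h := by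
    intro i j hij p h hh
    apply mul_left_cancel₀ (hXne i j hij)
    rw [hΔ, map_mul, hh (Equiv.swap i j), ← mul_assoc, hΔ, sub_mul]
  have hΔadd : ∀ (i j : Fin n), i ≠ j → ∀ p q,
      Δ i j (p + q) = Δ i j p + Δ i j q := by
    intro i j hij p q
    apply mul_left_cancel₀ (hXne i j hij)
    rw [hΔ, map_add, mul_add, hΔ, hΔ]
    ring
  have hDmul : ∀ (i : Fin n) p (h : MvPolynomial (Fin n) ℚ),
      h.IsSymmetric → D i (p * h) = D i p * h := by
    intro i p h hh
    rw [hD, hD, Finset.sum_mul]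
    refine Finset.sum_congr rfl fun j hj => ?_
    exact hΔmul i j (Ne.symm (Finset.mem_erase.1 hj).1) p h hh
  have hDadd : ∀ (i : Fin n) p q, D i (p + q) = D i p + D i q := by
    intro i p q
    rw [hD, hD, hD, ← Finset.sum_add_distrib]
    refine Finset.sum_congr rfl fun j hj => ?_
    exact hΔadd i j (Ne.symm (Finset.mem_erase.1 hj).1) p q
  have hItermul : ∀ (i : Fin n) (m : ℕ) p (h : MvPolynomial (Fin n) ℚ),
      h.IsSymmetric → (D i)^[m] (p * h) = (D i)^[m] p * h := by
    intro i m
    induction m with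
    | zero => intro p h hh; simp
    | succ m ih =>
        intro p h hh
        rw [Function.iterate_succ_apply, hDmul i p h hh, ih _ h hh,
          Function.iterate_succ_apply]
  have key : ∀ (i : Fin n) (m : ℕ) (a b : MvPolynomial (Fin n) ℚ),
      (D i)^[m] (a * g + f * b) = (D i)^[m] a * g + f * (D i)^[m] b := by
    intro i m
    induction m with
    | zero => intro a b; simp
    | succ m ih =>
        intro a b
        rw [Function.iterate_succ_apply, hDadd, hDmul i a g hg,
          show f * b = b * f by ring, hDmul i b f hf,
          show D i b * f = f * D i b by ring, ih,
          Function.iterate_succ_apply, Function.iterate_succ_apply]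
  rw [hP, hP, hP, Finset.sum_mul, Finset.mul_sum, ← Finset.sum_add_distrib]
  refine Finset.sum_congr rfl fun i _ => ?_
  rw [pderiv_mul, key]
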